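/- Let Ψ be a finite irreducible crystallographic root system with base Δ of cardinality m > 1, and let a ∈ Δ. Then the number of roots of Ψ that do not lie in the linear span of Δ∖{a} is strictly greater than 2; equivalently, #Ψ > #Ψ' + 2, where Ψ' = Ψ ∩ span(Δ∖{a}). (Counting claim used in the proof of Lemma 2.) -/

import Mathlib

open Set

/-- A root system is a root pairing for which the roots and coroots span their ambient modules
(Mathlib's former structure `RootSystem`, removed in favour of the class `IsRootSystem`). -/
structure RootSystem (ι R M N : Type*) [CommRing R] [AddCommGroup M] [Module R M]
    [AddCommGroup N] [Module R N] extends RootPairing ι R M N where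
  span_eq_top : Submodule.span R (range toRootPairing.root) = ⊤
  span_eq_top' : Submodule.span R (range toRootPairing.coroot) = ⊤

/-- A root pairing is irreducible if its set of roots admits no partition into two nonempty
mutually orthogonal parts. -/
def RootPairingIsIrreducible {ι R M N : Type*} [CommRing R] [AddCommGroup M] [Module R M]
    [AddCommGroup N] [Module R N] (P : RootPairing ι R M N) : Prop :=
  ∀ s : Set ι, s.Nonempty → sᶜ.Nonempty → ∃ i ∈ s, ∃ j ∈ sᶜ, P.pairing i j ≠ 0

/-- A base (set of simple roots) of a root system: a linearly independent set of roots such that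
every root is either a nonnegative integer combination or a nonpositive integer combination of
the roots in the base. -/
structure RootSystemIsBase {ι M N : Type*} [AddCommGroup M] [Module ℝ M]
    [AddCommGroup N] [Module ℝ N] (P : RootSystem ι ℝ M N) (Δ : Set ι) : Prop where
  linearIndependent : LinearIndependent ℝ (fun i : Δ => P.root i)
  pos_or_neg : ∀ i : ι, P.root i ∈ AddSubmonoid.closure (P.root '' Δ) ∨
    -P.root i ∈ AddSubmonoid.closure (P.root '' Δ)

/-- Let `Ψ` be a finite irreducible crystallographic root system with base `Δ` of cardinality
`m > 1`, and let `a ∈ Δ`. Then the number of roots of `Ψ` that do not lie in the linear span of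
`Δ \ {a}` is strictly greater than `2`; equivalently, `#Ψ > #Ψ' + 2`, where
`Ψ' = Ψ ∩ span (Δ \ {a})`. -/
theorem card_roots_not_in_span_gt_two
    {ι M N : Type*} [Fintype ι] [AddCommGroup M] [Module ℝ M] [AddCommGroup N] [Module ℝ N]
    (P : RootSystem ι ℝ M N)
    (hcrys : P.IsCrystallographic)
    (hirr : RootPairingIsIrreducible P.toRootPairing)
    (Δ : Set ι) (hΔ : RootSystemIsBase P Δ)
    (m : ℕ) (hm : 1 < m) (hcard : Nat.card Δ = m)
    (a : ι) (ha : a ∈ Δ) :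
    2 < Nat.card {i : ι | P.root i ∉ Submodule.span ℝ (P.root '' (Δ \ {a}))} ∧
    Nat.card {i : ι | P.root i ∈ Submodule.span ℝ (P.root '' (Δ \ {a}))} + 2
      < Fintype.card ι := by
  set W := Submodule.span ℝ (P.root '' (Δ \ {a})) with hWdef
  -- root a is not in W, by linear independence of the base
  have haW : P.root a ∉ W := by
    have h := hΔ.linearIndependent.notMem_span_image
      (s := {i : Δ | (i : ι) ≠ a}) (x := ⟨a, ha⟩) (by simp)
    have himg : (fun i : Δ => P.root i) '' {i : Δ | (i : ι) ≠ a}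
        = P.root '' (Δ \ {a}) := by
      ext x
      constructor
      · rintro ⟨⟨y, hy⟩, hya, rfl⟩; exact ⟨y, ⟨hy, hya⟩, rfl⟩
      · rintro ⟨y, ⟨hy, hya⟩, rfl⟩; exact ⟨⟨y, hy⟩, hya, rfl⟩
    rwa [himg] at h
  -- pick b ∈ Δ with b ≠ a
  obtain ⟨b, hb, hba⟩ : ∃ b, b ∈ Δ ∧ b ≠ a := by
    have h1 : 1 < Δ.ncard := by
      rw [← Nat.card_coe_set_eq, hcard]; exact hm
    exact Set.exists_ne_of_one_lt_ncard h1 a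
  set S : Set ι := {i | P.root i ∈ W} with hSdef
  have hSne : S.Nonempty := ⟨b, Submodule.subset_span ⟨b, ⟨hb, hba⟩, rfl⟩⟩
  have hScne : Sᶜ.Nonempty := ⟨a, haW⟩
  obtain ⟨i, hiS, j, hjS, hpair⟩ := hirr S hSne hScne
  have hiW : P.root i ∈ W := hiS
  have hjW : P.root j ∉ W := hjS
  have hjne : P.root j ≠ 0 := P.ne_zero j
  set j₂ := P.reflectionPerm j j with hj₂def
  set k := P.reflectionPerm j i with hkdef
  have hj₂ : P.root j₂ = - P.root j := by
    rw [hj₂def, P.root_reflectionPerm, P.reflection_apply_self]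
  have hk : P.root k = P.root i - P.pairing i j • P.root j := by
    rw [hkdef, P.root_reflectionPerm, P.reflection_apply_root]
  -- root k is not in W
  have hkW : P.root k ∉ W := by
    rw [hk]; intro hmem
    apply hjW
    have h1 : P.pairing i j • P.root j ∈ W := by
      have := W.sub_mem hiW hmem
      simpa using this
    have := W.smul_mem (P.pairing i j)⁻¹ h1
    rwa [inv_smul_smul₀ hpair] at this
  -- distinctness
  have hjj₂ : j ≠ j₂ := by
    intro h
    apply hjne
    have : P.root j = - P.root j := by conv_lhs => rw [h, hj₂]
    have h2 : (2 : ℝ) • P.root j = 0 := by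
      rw [two_smul]; nth_rewrite 2 [this]; abel
    simpa [smul_eq_zero] using h2
  have hkj : k ≠ j := by
    intro h
    have hr : P.root i = (1 + P.pairing i j) • P.root j := by
      have := hk
      rw [h] at this
      rw [add_smul, one_smul]
      linear_combination (norm := module) -this
    rcases eq_or_ne (1 + P.pairing i j) 0 with h0 | h0
    · exact P.ne_zero i (by rw [hr, h0, zero_smul])
    · apply hjW
      have := W.smul_mem (1 + P.pairing i j)⁻¹ (hr ▸ hiW)
      rwa [inv_smul_smul₀ h0] at this
  have hkj₂ : k ≠ j₂ := by
    intro h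
    have hr : P.root i = (P.pairing i j - 1) • P.root j := by
      have := hk
      rw [h, hj₂] at this
      rw [sub_smul, one_smul]
      linear_combination (norm := module) -this
    rcases eq_or_ne (P.pairing i j - 1) 0 with h0 | h0
    · exact P.ne_zero i (by rw [hr, h0, zero_smul])
    · apply hjW
      have := W.smul_mem (P.pairing i j - 1)⁻¹ (hr ▸ hiW)
      rwa [inv_smul_smul₀ h0] at this
  have hj₂W : P.root j₂ ∉ W := by
    rw [hj₂]; intro hmem
    exact hjW (by simpa using W.neg_mem hmem)
  have hTcompl : {i : ι | P.root i ∉ W} = Sᶜ := rfl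
  have h2 : 2 < Nat.card {i : ι | P.root i ∉ W} := by
    rw [Nat.card_coe_set_eq]
    exact (Set.two_lt_ncard (Set.toFinite _)).mpr
      ⟨j, hjW, j₂, hj₂W, k, hkW, hjj₂, fun h => hkj h.symm, fun h => hkj₂ h.symm⟩
  refine ⟨h2, ?_⟩
  have hsum : S.ncard + Sᶜ.ncard = Nat.card ι := Set.ncard_add_ncard_compl S
  have hS' : Nat.card S = S.ncard := Nat.card_coe_set_eq S
  have hSc' : Nat.card {i : ι | P.root i ∉ W} = Sᶜ.ncard := by
    rw [hTcompl, Nat.card_coe_set_eq]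
  rw [Nat.card_eq_fintype_card] at hsum
  have : Nat.card S + 2 < Fintype.card ι := by omega
  exact this
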